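/- Let [H•, E, G•] be a butterfly. Let H₁ ×_{H₀} E = {(h, e) ∈ H₁ × E : ∂_H(h) = π(e)} be the fiber product group. Then the map H₁ × G₁ → H₁ ×_{H₀} E given by (h, g) ↦ (h, κ(h) ι(g)) is a group isomorphism, where H₁ × G₁ is the direct product group. -/
import Mathlib


theorem stmt_12 {H₁ H₀ G₁ G₀ E : Type*} [Group H₁] [Group H₀] [Group G₁] [Group G₀] [Group E]
    (dH : H₁ →* H₀) (actH : H₁ → H₀ → H₁)
    (hH_one : ∀ g, actH g 1 = g)
    (hH_mul : ∀ g x y, actH g (x * y) = actH (actH g x) y)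
    (hH_hom : ∀ g g' x, actH (g * g') x = actH g x * actH g' x)
    (hH_d : ∀ g x, dH (actH g x) = x⁻¹ * dH g * x)
    (hH_peiffer : ∀ g h, actH g (dH h) = h⁻¹ * g * h)
    (dG : G₁ →* G₀) (actG : G₁ → G₀ → G₁)
    (hG_one : ∀ g, actG g 1 = g)
    (hG_mul : ∀ g x y, actG g (x * y) = actG (actG g x) y)
    (hG_hom : ∀ g g' x, actG (g * g') x = actG g x * actG g' x)
    (hG_d : ∀ g x, dG (actG g x) = x⁻¹ * dG g * x)
    (hG_peiffer : ∀ g h, actG g (dG h) = h⁻¹ * g * h)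
    (κ : H₁ →* E) (ι : G₁ →* E) (π : E →* H₀) (j : E →* G₀)
    (hπκ : ∀ h, π (κ h) = dH h)
    (hjι : ∀ g, j (ι g) = dG g)
    (hjκ : ∀ h, j (κ h) = 1)
    (hπsurj : Function.Surjective π)
    (hιinj : Function.Injective ι)
    (hkerπ : ∀ e, π e = 1 ↔ ∃ g, ι g = e)
    (heqG : ∀ g e, ι (actG g (j e)) = e⁻¹ * ι g * e)
    (heqH : ∀ h e, κ (actH h (π e)) = e⁻¹ * κ h * e) :
    (∀ p : H₁ × G₁, dH p.1 = π (κ p.1 * ι p.2)) ∧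
      (∀ p q : H₁ × G₁,
        (((p * q).1, κ (p * q).1 * ι (p * q).2) : H₁ × E) =
          (p.1 * q.1, (κ p.1 * ι p.2) * (κ q.1 * ι q.2))) ∧
      Function.Injective (fun p : H₁ × G₁ => ((p.1, κ p.1 * ι p.2) : H₁ × E)) ∧
      (∀ q : H₁ × E, dH q.1 = π q.2 →
        ∃ p : H₁ × G₁, ((p.1, κ p.1 * ι p.2) : H₁ × E) = q) := by
  have hπι : ∀ g : G₁, π (ι g) = 1 := fun g => (hkerπ (ι g)).mpr ⟨g, rfl⟩
  have hcomm : ∀ (h : H₁) (g : G₁), κ h * ι g = ι g * κ h := by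
    intro h g
    have := heqH h (ι g)
    rw [hπι g, hH_one] at this
    conv_rhs => rw [this]
    group
  refine ⟨?_, ?_, ?_, ?_⟩
  · intro p
    rw [map_mul, hπκ, hπι, mul_one]
  · intro p q
    simp only [Prod.mk.injEq, Prod.fst_mul, Prod.snd_mul, map_mul]
    refine ⟨trivial, ?_⟩
    simp only [mul_assoc]
    rw [← mul_assoc (κ q.1), hcomm, mul_assoc]
  · intro p q hpq
    simp only [Prod.mk.injEq] at hpq
    obtain ⟨h1, h2⟩ := hpq
    rw [h1] at h2
    have : ι p.2 = ι q.2 := by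
      have := mul_left_cancel h2
      exact this
    exact Prod.ext h1 (hιinj this)
  · rintro ⟨h, e⟩ hq
    have : π ((κ h)⁻¹ * e) = 1 := by
      rw [map_mul, map_inv, hπκ, ← hq]; group
    obtain ⟨g, hg⟩ := (hkerπ _).mp this
    exact ⟨(h, g), by simp [hg]⟩
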